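/- The rational point P = (1, 1) on the elliptic curve y^2 = x^3 - x + 1 has infinite order. -/

import Mathlib

/-- The elliptic curve `y² = x³ - x + 1` over `ℚ`. -/
def E6 : WeierstrassCurve.Affine ℚ :=
  { a₁ := 0, a₂ := 0, a₃ := 0, a₄ := -1, a₆ := 1 }

open WeierstrassCurve.Affine WeierstrassCurve.Affine.Point

local notation "v" => padicValRat 2

/-- valuation of a sum when the valuations differ. -/
lemma v_add_left {q r : ℚ} (hq : q ≠ 0) (hr : r ≠ 0) (h : v q < v r) :
    q + r ≠ 0 ∧ v (q + r) = v q := by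
  have hne : q + r ≠ 0 := by
    intro h0
    rw [add_eq_zero_iff_eq_neg] at h0
    rw [h0, padicValRat.neg] at h
    exact lt_irrefl _ h
  refine ⟨hne, ?_⟩
  have h1 : v q ≤ v (q + r) := by
    have := padicValRat.min_le_padicValRat_add (p := 2) hne
    rwa [min_eq_left h.le] at this
  rcases lt_or_eq_of_le h1 with h2 | h2
  · exfalso
    have h3 : q = (q + r) + (-r) := by ring
    have h4 : (q + r) + (-r) ≠ 0 := by rw [← h3]; exact hq
    have h5 := padicValRat.min_le_padicValRat_add (p := 2) h4
    rw [← h3, padicValRat.neg] at h5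
    exact absurd h5 (not_le.mpr (lt_min h2 h))
  · exact h2.symm

lemma nonsingular_of_equation {x y : ℚ} (hy : y ≠ 0) (heq : y ^ 2 = x ^ 3 - x + 1) :
    E6.Nonsingular x y := by
  rw [nonsingular_iff, equation_iff]
  constructor
  · simp only [E6]; ring_nf; ring_nf at heq; linarith
  · right
    simp only [E6]
    intro h0
    apply hy
    linarith

lemma negY_E6 (x y : ℚ) : E6.negY x y = -y := by
  simp [WeierstrassCurve.Affine.negY, E6]

lemma some_eq_some {x1 y1 x2 y2 : ℚ} (h1 : E6.Nonsingular x1 y1) (h2 : E6.Nonsingular x2 y2)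
    (hx : x1 = x2) (hy : y1 = y2) : Point.some _ _ h1 = Point.some _ _ h2 := by
  subst hx; subst hy; rfl

lemma some_inj_x {x1 y1 x2 y2 : ℚ} {h1 : E6.Nonsingular x1 y1} {h2 : E6.Nonsingular x2 y2}
    (h : Point.some _ _ h1 = Point.some _ _ h2) : x1 = x2 := by
  injection h

/-- The key predicate: `Q` is an affine point whose coordinates have 2-adic
valuations `-2m` and `-3m`. -/
def Good (m : ℕ) (Q : E6.Point) : Prop :=
  ∃ x y : ℚ, ∃ h : E6.Nonsingular x y, Q = Point.some _ _ h ∧ x ≠ 0 ∧ y ≠ 0 ∧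
    v x = -(2 * (m : ℤ)) ∧ v y = -(3 * (m : ℤ))

lemma v_two : v (2 : ℚ) = 1 := by
  rw [show (2:ℚ) = ((2:ℕ):ℚ) by norm_num, padicValRat.of_nat]
  rw [padicValNat.self (by norm_num)]; norm_num

lemma v_three : v (3 : ℚ) = 0 := by
  rw [show (3:ℚ) = ((3:ℕ):ℚ) by norm_num, padicValRat.of_nat,
    padicValNat.eq_zero_of_not_dvd (by norm_num)]
  norm_num

set_option maxHeartbeats 800000 in
/-- Doubling increases the level by one. -/
lemma good_double {m : ℕ} (hm : 1 ≤ m) {Q : E6.Point} (hQ : Good m Q) :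
    Good (m + 1) (Q + Q) := by
  obtain ⟨x, y, h, rfl, hx0, hy0, hvx, hvy⟩ := hQ
  have hm' : (1 : ℤ) ≤ (m : ℤ) := by exact_mod_cast hm
  have hy' : y ≠ E6.negY x y := by
    rw [negY_E6]; intro h0; apply hy0; linarith
  rw [add_self_of_Y_ne hy']
  have h' := nonsingular_add h h (fun hxy => hy' hxy.2)
  have hL : E6.slope x x y y = (3 * x ^ 2 - 1) / (2 * y) := by
    rw [slope_of_Y_ne rfl hy', negY_E6]; simp only [E6]; ring
  -- valuation of the numerator 3x² - 1
  have hx2 : x ^ 2 ≠ 0 := pow_ne_zero _ hx0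
  have hv3x2 : v (3 * x ^ 2) = -(4 * (m:ℤ)) := by
    rw [padicValRat.mul (by norm_num) hx2, v_three, padicValRat.pow _, hvx]; ring
  have h3x2 : (3 : ℚ) * x ^ 2 ≠ 0 := mul_ne_zero (by norm_num) hx2
  have hnum := v_add_left (q := 3 * x ^ 2) (r := -1) h3x2 (by norm_num)
    (by rw [hv3x2, padicValRat.neg, padicValRat.one]; omega)
  rw [show (3:ℚ) * x ^ 2 + -1 = 3 * x ^ 2 - 1 by ring] at hnum
  -- valuation of the denominator 2y
  have h2y : (2:ℚ) * y ≠ 0 := mul_ne_zero (by norm_num) hy0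
  have hv2y : v (2 * y) = 1 - 3 * (m:ℤ) := by
    rw [padicValRat.mul (by norm_num) hy0, v_two, hvy]; ring
  -- the slope
  have hLne : (3 * x ^ 2 - 1) / (2 * y) ≠ 0 := div_ne_zero hnum.1 h2y
  have hvL : v ((3 * x ^ 2 - 1) / (2 * y)) = -((m:ℤ) + 1) := by
    rw [padicValRat.div hnum.1 h2y, hnum.2, hv3x2, hv2y]; ring
  -- the new x-coordinate
  have hx'eq : E6.addX x x (E6.slope x x y y)
      = ((3 * x ^ 2 - 1) / (2 * y)) ^ 2 + (-2) * x := by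
    rw [WeierstrassCurve.Affine.addX, hL]; simp only [E6]; ring
  have hL2ne : ((3 * x ^ 2 - 1) / (2 * y)) ^ 2 ≠ 0 := pow_ne_zero _ hLne
  have hvL2 : v (((3 * x ^ 2 - 1) / (2 * y)) ^ 2) = -(2 * (m:ℤ) + 2) := by
    rw [padicValRat.pow _, hvL]; ring
  have hm2x : (-2 : ℚ) * x ≠ 0 := mul_ne_zero (by norm_num) hx0
  have hvm2x : v ((-2 : ℚ) * x) = 1 - 2 * (m:ℤ) := by
    rw [padicValRat.mul (by norm_num) hx0,
      show ((-2:ℚ)) = -(2:ℚ) by norm_num, padicValRat.neg, v_two, hvx]; ring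
  have hX := v_add_left hL2ne hm2x (by rw [hvL2, hvm2x]; omega)
  have hXne : E6.addX x x (E6.slope x x y y) ≠ 0 := by rw [hx'eq]; exact hX.1
  have hvX : v (E6.addX x x (E6.slope x x y y)) = -(2 * ((m:ℤ) + 1)) := by
    rw [hx'eq, hX.2, hvL2]; ring
  -- the new y-coordinate, via the curve equation
  have heq0 := ((E6.nonsingular_iff _ _).mp h').1
  rw [equation_iff, show E6.a₁ = 0 from rfl, show E6.a₂ = 0 from rfl,
    show E6.a₃ = 0 from rfl, show E6.a₄ = -1 from rfl, show E6.a₆ = 1 from rfl] at heq0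
  have heq : E6.addY x x y (E6.slope x x y y) ^ 2
      = E6.addX x x (E6.slope x x y y) ^ 3 - E6.addX x x (E6.slope x x y y) + 1 := by
    linarith
  have hx'3 : E6.addX x x (E6.slope x x y y) ^ 3 ≠ 0 := pow_ne_zero _ hXne
  have hvx'3 : v (E6.addX x x (E6.slope x x y y) ^ 3) = -(6 * (m:ℤ) + 6) := by
    rw [padicValRat.pow _, hvX]; ring
  have hc := v_add_left (q := -E6.addX x x (E6.slope x x y y)) (r := 1)
    (neg_ne_zero.mpr hXne) one_ne_zero
    (by rw [padicValRat.neg, hvX, padicValRat.one]; omega)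
  rw [padicValRat.neg, hvX] at hc
  have hrhs := v_add_left hx'3 hc.1 (by rw [hvx'3, hc.2]; omega)
  rw [show E6.addX x x (E6.slope x x y y) ^ 3 + (-E6.addX x x (E6.slope x x y y) + 1)
      = E6.addX x x (E6.slope x x y y) ^ 3 - E6.addX x x (E6.slope x x y y) + 1 by ring] at hrhs
  have hYne : E6.addY x x y (E6.slope x x y y) ≠ 0 := by
    intro h0
    rw [h0] at heq
    exact hrhs.1 (by linarith)
  have hvY : v (E6.addY x x y (E6.slope x x y y)) = -(3 * ((m:ℤ) + 1)) := by
    have h2vy : (2:ℤ) * v (E6.addY x x y (E6.slope x x y y))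
        = v (E6.addY x x y (E6.slope x x y y) ^ 2) := by
      rw [padicValRat.pow _]; ring
    rw [heq, hrhs.2, hvx'3] at h2vy
    omega
  exact ⟨_, _, h', rfl, hXne, hYne, by rw [hvX]; push_cast; ring, by rw [hvY]; push_cast; ring⟩

lemma ns_P2 : E6.Nonsingular (-1) 1 :=
  nonsingular_of_equation one_ne_zero (by norm_num)

lemma ns_P3 : E6.Nonsingular 0 (-1) :=
  nonsingular_of_equation (by norm_num) (by norm_num)

lemma ns_P6 : E6.Nonsingular (1/4) (7/8) :=
  nonsingular_of_equation (by norm_num) (by norm_num)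

lemma double_P (h : E6.Nonsingular 1 1) : Point.some _ _ h + Point.some _ _ h = Point.some _ _ ns_P2 := by
  have hy : (1:ℚ) ≠ E6.negY 1 1 := by rw [negY_E6]; norm_num
  rw [add_self_of_Y_ne hy]
  refine some_eq_some _ _ ?_ ?_
  · rw [WeierstrassCurve.Affine.addX, slope_of_Y_ne rfl hy, negY_E6]
    simp only [E6]; norm_num
  · rw [WeierstrassCurve.Affine.addY, WeierstrassCurve.Affine.negAddY,
      WeierstrassCurve.Affine.negY, WeierstrassCurve.Affine.addX,
      slope_of_Y_ne rfl hy, negY_E6]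
    simp only [E6]; norm_num

lemma triple_P (h : E6.Nonsingular 1 1) :
    Point.some _ _ h + (Point.some _ _ h + Point.some _ _ h) = Point.some _ _ ns_P3 := by
  rw [double_P h]
  have hx : (1:ℚ) ≠ -1 := by norm_num
  rw [add_of_X_ne hx]
  refine some_eq_some _ _ ?_ ?_
  · rw [WeierstrassCurve.Affine.addX, slope_of_X_ne hx]
    simp only [E6]; norm_num
  · rw [WeierstrassCurve.Affine.addY, WeierstrassCurve.Affine.negAddY,
      WeierstrassCurve.Affine.negY, WeierstrassCurve.Affine.addX, slope_of_X_ne hx]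
    simp only [E6]; norm_num

lemma sextuple_P (h : E6.Nonsingular 1 1) : (6 : ℕ) • Point.some _ _ h = Point.some _ _ ns_P6 := by
  have h6 : (6 : ℕ) • Point.some _ _ h
      = (Point.some _ _ h + (Point.some _ _ h + Point.some _ _ h))
        + (Point.some _ _ h + (Point.some _ _ h + Point.some _ _ h)) := by
    rw [show (6:ℕ) = 3 + 3 by rfl, add_nsmul]
    rw [show (3:ℕ) = 1 + 2 by rfl, add_nsmul, one_nsmul, two_nsmul]
  rw [h6, triple_P h]
  have hy : (-1:ℚ) ≠ E6.negY 0 (-1) := by rw [negY_E6]; norm_num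
  rw [add_self_of_Y_ne hy]
  refine some_eq_some _ _ ?_ ?_
  · rw [WeierstrassCurve.Affine.addX, slope_of_Y_ne rfl hy, negY_E6]
    simp only [E6]; norm_num
  · rw [WeierstrassCurve.Affine.addY, WeierstrassCurve.Affine.negAddY,
      WeierstrassCurve.Affine.negY, WeierstrassCurve.Affine.addX,
      slope_of_Y_ne rfl hy, negY_E6]
    simp only [E6]; norm_num

lemma good_one (h : E6.Nonsingular 1 1) : Good 1 ((6 : ℕ) • Point.some _ _ h) := by
  rw [sextuple_P h]
  refine ⟨1/4, 7/8, ns_P6, rfl, by norm_num, by norm_num, ?_, ?_⟩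
  · rw [show (1/4 : ℚ) = (((2:ℕ):ℚ)^2)⁻¹ by norm_num, padicValRat.self_pow_inv]
    norm_num
  · rw [show (7/8 : ℚ) = ((7:ℕ):ℚ) * (((2:ℕ):ℚ)^3)⁻¹ by norm_num,
      padicValRat.mul (by norm_num) (by norm_num), padicValRat.self_pow_inv,
      padicValRat.of_nat, padicValNat.eq_zero_of_not_dvd (by norm_num)]
    norm_num

lemma good_pow (h : E6.Nonsingular 1 1) (k : ℕ) :
    Good (k + 1) ((2 ^ k * 6 : ℕ) • Point.some _ _ h) := by
  induction k with
  | zero => simpa using good_one h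
  | succ k ih =>
    have : (2 ^ (k+1) * 6 : ℕ) • Point.some _ _ h
        = (2 ^ k * 6 : ℕ) • Point.some _ _ h + (2 ^ k * 6 : ℕ) • Point.some _ _ h := by
      rw [← two_nsmul, ← mul_nsmul]
      ring_nf
    rw [this]
    exact good_double (Nat.le_add_left 1 k) ih

/-- The point `(1, 1)` on `y² = x³ - x + 1` has infinite order. -/
theorem stmt_6 (h : E6.Nonsingular 1 1) :
    ∀ n : ℕ, 0 < n → n • (WeierstrassCurve.Affine.Point.some 1 1 h) ≠ 0 := by
  intro n hn hP
  -- multiples only depend on the exponent mod n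
  have hmod : ∀ m : ℕ, m • Point.some _ _ h = (m % n) • Point.some _ _ h := by
    intro m
    conv_lhs => rw [← Nat.mod_add_div m n]
    rw [add_nsmul, mul_nsmul, hP, nsmul_zero, add_zero]
  -- pigeonhole on k ↦ (2^k * 6) % n
  have hex : ∃ a b : Fin (n + 1), a ≠ b ∧ (2 ^ (a:ℕ) * 6) % n = (2 ^ (b:ℕ) * 6) % n := by
    have hcard : Fintype.card (Fin n) < Fintype.card (Fin (n + 1)) := by simp
    obtain ⟨a, b, hab, heq⟩ := Fintype.exists_ne_map_eq_of_card_lt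
      (fun k : Fin (n + 1) => (⟨(2 ^ (k:ℕ) * 6) % n, Nat.mod_lt _ hn⟩ : Fin n)) hcard
    exact ⟨a, b, hab, by simpa using heq⟩
  obtain ⟨a, b, hab, habm⟩ := hex
  have heqpt : (2 ^ (a:ℕ) * 6 : ℕ) • Point.some _ _ h = (2 ^ (b:ℕ) * 6 : ℕ) • Point.some _ _ h := by
    rw [hmod (2 ^ (a:ℕ) * 6), hmod (2 ^ (b:ℕ) * 6), habm]
  have ga := good_pow h a
  have gb := good_pow h b
  obtain ⟨xa, ya, hna, hea, _, _, hva, _⟩ := ga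
  obtain ⟨xb, yb, hnb, heb, _, _, hvb, _⟩ := gb
  rw [hea, heb] at heqpt
  have hx : xa = xb := some_inj_x heqpt
  rw [hx, hvb] at hva
  have : (a : ℕ) = (b : ℕ) := by omega
  exact hab (Fin.ext this)
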